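/- There exist a sequence (a_n)_{n≥1} of positive integers (equivalently, an irrational α ∈ (0,1) with these continued fraction coefficients), a subadditive function F : 𝒲 → ℝ on the associated set 𝒲 of Sturmian words, and sequences (w_n^1)_{n∈ℕ} and (w_n^2)_{n∈ℕ} in 𝒲 with |w_n^1| → ∞ and |w_n^2| → ∞ such that limsup_{n→∞} F(w_n^1)/|w_n^1| < liminf_{n→∞} F(w_n^2)/|w_n^2|. In particular, the limit of F(w)/|w| as |w| → ∞ along 𝒲 does not exist, i.e. the uniform subadditive ergodic theorem fails for 𝒲. -/

import Mathlib

open Filter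

noncomputable section

/-- `k`-fold concatenation of a word. -/
def wpow (w : List Bool) : ℕ → List Bool
  | 0 => []
  | n + 1 => w ++ wpow w n

/-- The standard Sturmian words `s_{-1}, s_0, s_1, s_2, …` associated to a sequence
`(a_n)_{n ≥ 1}` of positive integers (the continued fraction coefficients):
`st a 0 = s_{-1} = 1`, `st a 1 = s_0 = 0`, `st a 2 = s_1 = s_0^{a_1 - 1} s_{-1}` and
`st a (n+1) = s_n = s_{n-1}^{a_n} s_{n-2}` for `n ≥ 2` (`false` plays the role of the
letter `0` and `true` of the letter `1`). -/
def st (a : ℕ → ℕ) : ℕ → List Bool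
  | 0 => [true]
  | 1 => [false]
  | 2 => wpow [false] (a 1 - 1) ++ [true]
  | n + 3 => wpow (st a (n + 2)) (a (n + 2)) ++ st a (n + 1)

/-- The set `𝒲` of Sturmian words: all subwords of some `s_n`, `n ≥ 0`. -/
def sturmW (a : ℕ → ℕ) : Set (List Bool) :=
  {w | ∃ n : ℕ, 1 ≤ n ∧ w <:+: st a n}

/-- A subadditive function on a set of words: `F(uv) ≤ F(u) + F(v)` whenever `u`, `v`
and `uv` all belong to `W`, together with a linear bound `|F(w)| ≤ d·|w|`. -/
def WordSubadditive (W : Set (List Bool)) (F : List Bool → ℝ) : Prop :=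
  (∀ u v : List Bool, u ∈ W → v ∈ W → u ++ v ∈ W → F (u ++ v) ≤ F u + F v) ∧
    ∃ dd : ℝ, 0 ≤ dd ∧ ∀ w ∈ W, |F w| ≤ dd * w.length

/-- Number of occurrences of `v` as a subword of `w`: the number of indices
`0 ≤ i ≤ |w| - |v|` with `v = w_{i+1} ⋯ w_{i+|v|}`. -/
def occ (v w : List Bool) : ℕ :=
  ((Finset.range (w.length + 1 - v.length)).filter
    fun i => (w.drop i).take v.length = v).card

/-- The superadditive weight `G(w) = Σ_{n ≥ 1} #_{s_{n-1} s_n}(w) · (|s_{n-1}| + |s_n|)`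
(all but finitely many terms vanish). -/
def Gfun (a : ℕ → ℕ) (w : List Bool) : ℝ :=
  ∑' n : ℕ, (occ (st a (n + 1) ++ st a (n + 2)) w : ℝ) *
    (((st a (n + 1)).length : ℝ) + ((st a (n + 2)).length : ℝ))


-- wpow lemmas
@[simp] lemma wpow_zero (w : List Bool) : wpow w 0 = [] := rfl
lemma wpow_succ (w : List Bool) (k : ℕ) : wpow w (k+1) = w ++ wpow w k := rfl

lemma wpow_add (w : List Bool) (k l : ℕ) : wpow w (k+l) = wpow w k ++ wpow w l := by
  induction k with
  | zero => simp
  | succ k ih => rw [Nat.succ_add, wpow_succ, ih, wpow_succ, List.append_assoc]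

lemma wpow_succ' (w : List Bool) (k : ℕ) : wpow w (k+1) = wpow w k ++ w := by
  rw [wpow_add w k 1]; simp [wpow]

lemma wpow_comm (w : List Bool) (k : ℕ) : w ++ wpow w k = wpow w k ++ w := by
  rw [← wpow_succ, wpow_succ']

@[simp] lemma wpow_length (w : List Bool) (k : ℕ) : (wpow w k).length = k * w.length := by
  induction k with
  | zero => simp
  | succ k ih => rw [wpow_succ]; simp [ih, Nat.succ_mul, Nat.add_comm]

-- the sequence
def A : ℕ → ℕ := fun n => 48 * 2 ^ n

lemma A_pos (n : ℕ) : 1 ≤ A n := by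
  have : 0 < 2 ^ n := Nat.pow_pos (by norm_num)
  simp [A]; omega

lemma A_ge_two (n : ℕ) : 2 ≤ A n := by
  have : 0 < 2 ^ n := Nat.pow_pos (by norm_num)
  simp [A]; omega

def S : ℕ → List Bool := st A

lemma S_def3 (k : ℕ) : S (k+3) = wpow (S (k+2)) (A (k+2)) ++ S (k+1) := rfl

lemma S_two : S 2 = wpow [false] 95 ++ [true] := by
  show st A 2 = _
  have : A 1 - 1 = 95 := by norm_num [A]
  rw [st]; rw [this]

def ℓ : ℕ → ℕ := fun n => (S n).length

lemma ell_zero : ℓ 0 = 1 := rfl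
lemma ell_one : ℓ 1 = 1 := rfl
lemma ell_two : ℓ 2 = 96 := by simp [ℓ, S_two]
lemma ell_def3 (k : ℕ) : ℓ (k+3) = A (k+2) * ℓ (k+2) + ℓ (k+1) := by
  simp [ℓ, S_def3]

lemma ell_pos (n : ℕ) : 1 ≤ ℓ n := by
  induction n using Nat.strong_induction_on with
  | _ n ih =>
    match n with
    | 0 => exact le_refl 1
    | 1 => exact le_refl 1
    | 2 => rw [ell_two]; norm_num
    | (k+3) =>
      rw [ell_def3]
      have h1 := ih (k+1) (by omega)
      have h2 := ih (k+2) (by omega)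
      have := A_pos (k+2)
      nlinarith

lemma ell_mono (n : ℕ) (h : 1 ≤ n) : ℓ n ≤ ℓ (n+1) := by
  match n, h with
  | 1, _ => rw [ell_one, ell_two]; norm_num
  | 2, _ => rw [ell_two, ell_def3]; have := ell_pos 1; have := A_ge_two 2; nlinarith [ell_pos 2, ell_two]
  | (k+3), _ =>
    show ℓ (k+3) ≤ ℓ (k+4)
    have e : ℓ (k+4) = A (k+3) * ℓ (k+3) + ℓ (k+2) := ell_def3 (k+1)
    have h1 := ell_pos (k+2)
    have h3 : ℓ (k+3) ≤ A (k+3) * ℓ (k+3) := Nat.le_mul_of_pos_left _ (A_pos (k+3))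
    omega

lemma ell_mono' {m n : ℕ} (hm : 1 ≤ m) (h : m ≤ n) : ℓ m ≤ ℓ n := by
  induction n with
  | zero => omega
  | succ n ih =>
    rcases Nat.lt_or_ge m (n+1) with h' | h'
    · exact le_trans (ih (by omega)) (ell_mono n (by omega))
    · have : m = n+1 := by omega
      subst this; exact le_refl _

lemma ell_ge_self (n : ℕ) (h : 1 ≤ n) : n ≤ ℓ n := by
  induction n using Nat.strong_induction_on with
  | _ n ih =>
    match n with
    | 1 => exact le_refl 1
    | 2 => rw [ell_two]; norm_num
    | (k+3) =>
      rw [ell_def3]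
      have h1 := ih (k+2) (by omega) (by omega)
      have h2 := A_ge_two (k+2)
      have := ell_pos (k+1)
      nlinarith

-- prefix lemmas
lemma S_prefix (k : ℕ) (h : 1 ≤ k) : S k <+: S (k+1) := by
  match k, h with
  | 1, _ =>
    rw [S_two]
    show [false] <+: _
    have : (95:ℕ) = 1 + 94 := by norm_num
    rw [this, wpow_add]
    exact ⟨wpow [false] 94 ++ [true], by simp [wpow]⟩
  | (k+2), _ =>
    rw [S_def3 k]
    obtain ⟨e, he⟩ : ∃ e, A (k+2) = e + 1 := ⟨A (k+2) - 1, by have := A_pos (k+2); omega⟩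
    rw [he, wpow_succ]
    exact ⟨wpow (S (k+2)) e ++ S (k+1), by simp⟩

lemma S_prefix' {m n : ℕ} (hm : 1 ≤ m) (h : m ≤ n) : S m <+: S n := by
  induction n with
  | zero => omega
  | succ n ih =>
    rcases Nat.lt_or_ge m (n+1) with h' | h'
    · exact (ih (by omega)).trans (S_prefix n (by omega))
    · have : m = n+1 := by omega
      subst this; exact List.prefix_refl _

-- the swap lemma
lemma swap_lemma (k : ℕ) (h : 1 ≤ k) :
    ∃ (w : List Bool) (x y : Bool), x ≠ y ∧
      S (k+1) ++ S k = w ++ [x, y] ∧ S k ++ S (k+1) = w ++ [y, x] := by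
  induction k with
  | zero => omega
  | succ k ih =>
    match k with
    | 0 =>
      refine ⟨wpow [false] 95, true, false, by simp, ?_, ?_⟩
      · rw [S_two]
        show (wpow [false] 95 ++ [true]) ++ [false] = _
        simp
      · rw [S_two]
        show [false] ++ (wpow [false] 95 ++ [true]) = _
        rw [← List.append_assoc, wpow_comm]
        simp
    | (k+1) =>
      obtain ⟨w, x, y, hxy, h1, h2⟩ := ih (by omega)
      have h1' : S (k+2) ++ S (k+1) = w ++ [x, y] := h1
      have h2' : S (k+1) ++ S (k+2) = w ++ [y, x] := h2
      refine ⟨wpow (S (k+2)) (A (k+2)) ++ w, y, x, fun h => hxy h.symm, ?_, ?_⟩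
      · show S (k+3) ++ S (k+2) = _
        rw [S_def3 k]
        rw [List.append_assoc, h2', ← List.append_assoc]
      · show S (k+2) ++ S (k+3) = _
        rw [S_def3 k, ← List.append_assoc, wpow_comm, List.append_assoc, h1',
          ← List.append_assoc]

-- choice of the difference word for index j: pair (S (j+3), S (j+2)), apply swap_lemma (j+2)
def wd (j : ℕ) : List Bool := (swap_lemma (j+2) (by omega)).choose

lemma wd_spec (j : ℕ) : ∃ (x y : Bool), x ≠ y ∧
    S (j+3) ++ S (j+2) = wd j ++ [x, y] ∧ S (j+2) ++ S (j+3) = wd j ++ [y, x] :=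
  (swap_lemma (j+2) (by omega)).choose_spec

lemma wd_length (j : ℕ) : (wd j).length + 2 = ℓ (j+3) + ℓ (j+2) := by
  obtain ⟨x, y, _, h1, _⟩ := wd_spec j
  have := congrArg List.length h1
  simp [ℓ] at this ⊢
  omega

-- the rare words
def U (j : ℕ) : List Bool := wpow (S (j+3)) (A (j+3) + 1) ++ wd j

lemma U_length (j : ℕ) : (U j).length + 2 = ℓ (j+4) + 2 * ℓ (j+3) := by
  have h := wd_length j
  have e : ℓ (j+4) = A (j+3) * ℓ (j+3) + ℓ (j+2) := ell_def3 (j+1)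
  simp only [U, List.length_append, wpow_length]
  show (A (j+3) + 1) * ℓ (j+3) + (wd j).length + 2 = _
  nlinarith [h, e]

lemma U_length_lb (j : ℕ) : ℓ (j+4) + 2 ≤ (U j).length := by
  have := U_length j
  have h2 : 2 ≤ ℓ (j+3) := le_trans (by omega) (ell_ge_self (j+3) (by omega))
  omega

-- occurrences
def IsOcc (u w : List Bool) (i : ℕ) : Prop :=
  ∃ pre suf : List Bool, w = pre ++ u ++ suf ∧ pre.length = i

lemma isOcc_length {u w : List Bool} {i : ℕ} (h : IsOcc u w i) :
    i + u.length ≤ w.length := by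
  obtain ⟨pre, suf, hw, hl⟩ := h
  subst hl; subst hw; simp

lemma isOcc_shift_left {u x y : List Bool} {i : ℕ} (h : IsOcc u x i) : IsOcc u (x ++ y) i := by
  obtain ⟨pre, suf, hw, hl⟩ := h
  exact ⟨pre, suf ++ y, by rw [hw]; simp, hl⟩

lemma isOcc_shift_right {u x y : List Bool} {i : ℕ} (h : IsOcc u y i) :
    IsOcc u (x ++ y) (x.length + i) := by
  obtain ⟨pre, suf, hw, hl⟩ := h
  exact ⟨x ++ pre, suf, by rw [hw]; simp, by simp [hl]⟩

lemma isOcc_self (u : List Bool) : IsOcc u u 0 := ⟨[], [], by simp, rfl⟩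

lemma mid_getElem? {w pre u suf : List Bool} (hw : w = pre ++ u ++ suf) {s : ℕ}
    (hs : s < u.length) : w[pre.length + s]? = u[s]? := by
  subst hw
  rw [List.append_assoc, List.getElem?_append_right (by omega)]
  have e : pre.length + s - pre.length = s := by omega
  rw [e, List.getElem?_append, if_pos hs]

lemma isOcc_getElem? {u w : List Bool} {i : ℕ} (h : IsOcc u w i) {s : ℕ}
    (hs : s < u.length) : w[i + s]? = u[s]? := by
  obtain ⟨pre, suf, hw, hl⟩ := h
  subst hl
  exact mid_getElem? hw hs

lemma prefix_getElem? {u v : List Bool} (h : u <+: v) {s : ℕ} (hs : s < u.length) :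
    v[s]? = u[s]? := by
  obtain ⟨t, ht⟩ := h
  rw [← ht, List.getElem?_append, if_pos hs]

-- period lemma for powers
lemma wpow_getElem_period (x : List Bool) :
    ∀ (K s : ℕ), s + x.length < (wpow x K).length →
      (wpow x K)[s + x.length]? = (wpow x K)[s]? := by
  intro K
  induction K with
  | zero => intro s h; simp at h
  | succ K ih =>
    intro s h
    have hlen : (wpow x (K+1)).length = K * x.length + x.length := by
      rw [wpow_length]; ring
    have hlen2 : (wpow x K).length = K * x.length := wpow_length x K
    have hx : 0 < x.length := by
      by_contra hc
      have hc' : x.length = 0 := by omega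
      rw [hc'] at hlen h
      omega
    rcases Nat.lt_or_ge s x.length with hs | hs
    · have hK : 1 ≤ K := by
        by_contra hc
        have hzero : K = 0 := by omega
        subst hzero
        rw [wpow_length] at h
        omega
      rw [wpow_succ, List.getElem?_append_right (by omega : x.length ≤ s + x.length)]
      have e : s + x.length - x.length = s := by omega
      rw [e, List.getElem?_append, if_pos hs]
      obtain ⟨K', hK'⟩ : ∃ K', K = K' + 1 := ⟨K - 1, by omega⟩
      subst hK'
      rw [wpow_succ, List.getElem?_append, if_pos hs]
    · obtain ⟨s', hs'⟩ : ∃ s', s = x.length + s' := ⟨s - x.length, by omega⟩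
      subst hs'
      rw [wpow_succ,
        List.getElem?_append_right (by omega : x.length ≤ x.length + s' + x.length),
        List.getElem?_append_right (by omega : x.length ≤ x.length + s')]
      have e1 : x.length + s' + x.length - x.length = s' + x.length := by omega
      have e2 : x.length + s' - x.length = s' := by omega
      rw [e1, e2]
      apply ih
      omega

lemma U_prefix_pow (j : ℕ) : U j <+: wpow (S (j+3)) (A (j+3) + 3) := by
  obtain ⟨x, y, _, h1, _⟩ := wd_spec j
  have hwd : wd j <+: S (j+3) ++ S (j+2) := ⟨[x, y], h1.symm⟩
  have h2 : S (j+3) ++ S (j+2) <+: S (j+3) ++ S (j+3) :=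
    (List.prefix_append_right_inj (S (j+3))).2 (S_prefix (j+2) (by omega))
  have h3 : wd j <+: wpow (S (j+3)) 2 := by
    refine (hwd.trans h2).trans ?_
    show S (j+3) ++ S (j+3) <+: _
    simp [wpow]
  have e : wpow (S (j+3)) (A (j+3) + 3) = wpow (S (j+3)) (A (j+3) + 1) ++ wpow (S (j+3)) 2 := by
    rw [← wpow_add]
  rw [e]
  exact (List.prefix_append_right_inj _).2 h3

lemma U_period (j s : ℕ) (h1 : s + ℓ (j+3) < (U j).length) :
    (U j)[s + ℓ (j+3)]? = (U j)[s]? := by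
  have hp := U_prefix_pow j
  rw [← prefix_getElem? hp h1, ← prefix_getElem? hp (by omega : s < (U j).length)]
  exact wpow_getElem_period (S (j+3)) (A (j+3) + 3) s
    (lt_of_lt_of_le h1 hp.length_le)

-- the junction word z
def zw (j : ℕ) : List Bool := S (j+3) ++ S (j+2) ++ S (j+3)

lemma zw_length (j : ℕ) : (zw j).length = 2 * ℓ (j+3) + ℓ (j+2) := by
  simp [zw, ℓ]; ring

-- occurrences of zw inside S (j+5)
lemma zw_positions (j : ℕ) (d : ℕ) (hd : d < A (j+4)) :
    ∃ pre suf : List Bool, S (j+5) = pre ++ zw j ++ suf ∧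
      pre.length + ℓ (j+3) = d * ℓ (j+4) + A (j+3) * ℓ (j+3) := by
  -- T k := wpow (S (j+4)) k ++ S (j+3), starts with S (j+3)
  have startS : ∀ k : ℕ, ∃ R : List Bool, wpow (S (j+4)) k ++ S (j+3) = S (j+3) ++ R := by
    intro k
    match k with
    | 0 => exact ⟨[], by simp⟩
    | (k+1) =>
      obtain ⟨e, he⟩ : ∃ e, A (j+3) = e + 1 := ⟨A (j+3) - 1, by have := A_pos (j+3); omega⟩
      refine ⟨wpow (S (j+3)) e ++ S (j+2) ++ (wpow (S (j+4)) k ++ S (j+3)), ?_⟩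
      rw [wpow_succ]
      have h4 : S (j+4) = wpow (S (j+3)) (A (j+3)) ++ S (j+2) := S_def3 (j+1)
      rw [h4, he, wpow_succ]
      simp [List.append_assoc]
  -- decompose A (j+4) = d + 1 + k
  obtain ⟨k, hk⟩ : ∃ k, A (j+4) = d + (k + 1) := ⟨A (j+4) - d - 1, by omega⟩
  obtain ⟨e, he⟩ : ∃ e, A (j+3) = e + 1 := ⟨A (j+3) - 1, by have := A_pos (j+3); omega⟩
  obtain ⟨R, hR⟩ := startS k
  have h5 : S (j+5) = wpow (S (j+4)) (A (j+4)) ++ S (j+3) := S_def3 (j+2)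
  have h4 : S (j+4) = wpow (S (j+3)) (A (j+3)) ++ S (j+2) := S_def3 (j+1)
  refine ⟨wpow (S (j+4)) d ++ wpow (S (j+3)) e, R, ?_, ?_⟩
  · rw [h5, hk, wpow_add, List.append_assoc, wpow_succ, List.append_assoc, hR]
    rw [h4, he, wpow_succ']
    simp only [zw, List.append_assoc]
  · simp only [List.length_append, wpow_length]
    show d * ℓ (j+4) + e * ℓ (j+3) + ℓ (j+3) = _
    nlinarith [he]

-- U j does not occur in S (j+5)
lemma noOcc (j : ℕ) (i : ℕ) : ¬ IsOcc (U j) (S (j+5)) i := by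
  intro hocc
  obtain ⟨x, y, hxy, hz1, hz2⟩ := wd_spec j
  have hUlen : (U j).length + 2 = ℓ (j+4) + 2 * ℓ (j+3) := U_length j
  have hldef : ℓ (j+4) = A (j+3) * ℓ (j+3) + ℓ (j+2) := ell_def3 (j+1)
  have h5len : ℓ (j+5) = A (j+4) * ℓ (j+4) + ℓ (j+3) := ell_def3 (j+2)
  have hilen : i + (U j).length ≤ A (j+4) * ℓ (j+4) + ℓ (j+3) := by
    have h := isOcc_length hocc
    have : (S (j+5)).length = ℓ (j+5) := rfl
    omega
  have hPge : 3 ≤ ℓ (j+3) := by have := ell_ge_self (j+3) (by omega); omega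
  have hpge : 1 ≤ ℓ (j+2) := ell_pos (j+2)
  have hlge : 4 ≤ ℓ (j+4) := by have := ell_ge_self (j+4) (by omega); omega
  have hwdlen : (wd j).length + 2 = ℓ (j+3) + ℓ (j+2) := wd_length j
  set d := (i + ℓ (j+3) - 1) / ℓ (j+4) with hd
  have hdiv := Nat.div_add_mod (i + ℓ (j+3) - 1) (ℓ (j+4))
  have hmod : (i + ℓ (j+3) - 1) % ℓ (j+4) < ℓ (j+4) := Nat.mod_lt _ (by omega)
  rw [← hd] at hdiv
  have hd1 : ℓ (j+4) * d ≤ i + ℓ (j+3) - 1 := by omega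
  have hdlt : d < A (j+4) := by
    rw [hd, Nat.div_lt_iff_lt_mul (by omega : 0 < ℓ (j+4))]
    have hc : A (j+4) * ℓ (j+4) = ℓ (j+4) * A (j+4) := Nat.mul_comm _ _
    omega
  obtain ⟨pre, suf, hsplit, hprelen⟩ := zw_positions j d hdlt
  have hcm1 : d * ℓ (j+4) = ℓ (j+4) * d := Nat.mul_comm _ _
  -- bounds for the position t := pre.length + |wd j|
  have htub : (pre.length + (wd j).length) + ℓ (j+3) + 1 ≤ i + (U j).length := by omega
  have htlb : i ≤ pre.length + (wd j).length := by omega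
  -- letter facts about zw
  have hzlen : (zw j).length = 2 * ℓ (j+3) + ℓ (j+2) := zw_length j
  have hWz1 : zw j = wd j ++ ([x, y] ++ S (j+3)) := by
    unfold zw
    rw [hz1, List.append_assoc]
  have hWz2 : zw j = (S (j+3) ++ wd j) ++ [y, x] := by
    unfold zw
    rw [List.append_assoc, hz2, ← List.append_assoc]
  have hlet1 : (S (j+5))[pre.length + (wd j).length]? = some x := by
    rw [mid_getElem? hsplit (by omega : (wd j).length < (zw j).length)]
    rw [hWz1, List.getElem?_append_right (le_refl (wd j).length)]
    simp
  have hlet2 : (S (j+5))[pre.length + ((wd j).length + ℓ (j+3))]? = some y := by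
    rw [mid_getElem? hsplit (by omega : (wd j).length + ℓ (j+3) < (zw j).length)]
    rw [hWz2, List.getElem?_append_right
      (by simp [ℓ]; omega : (S (j+3) ++ wd j).length ≤ (wd j).length + ℓ (j+3))]
    have e : (wd j).length + ℓ (j+3) - (S (j+3) ++ wd j).length = 0 := by
      simp [ℓ]; omega
    rw [e]
    simp
  -- occurrence letters
  have ho1 : (S (j+5))[i + (pre.length + (wd j).length - i)]? =
      (U j)[pre.length + (wd j).length - i]? :=
    isOcc_getElem? hocc (by omega)
  have ho2 : (S (j+5))[i + (pre.length + (wd j).length - i + ℓ (j+3))]? =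
      (U j)[pre.length + (wd j).length - i + ℓ (j+3)]? :=
    isOcc_getElem? hocc (by omega)
  have hper : (U j)[pre.length + (wd j).length - i + ℓ (j+3)]? =
      (U j)[pre.length + (wd j).length - i]? :=
    U_period j _ (by omega)
  have e1 : i + (pre.length + (wd j).length - i) = pre.length + (wd j).length := by omega
  have e2 : i + (pre.length + (wd j).length - i + ℓ (j+3)) =
      pre.length + ((wd j).length + ℓ (j+3)) := by omega
  rw [e1, hlet1] at ho1
  rw [e2, hlet2] at ho2
  rw [hper, ← ho1] at ho2
  exact hxy (by injection ho2.symm)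

-- U j is a factor of S (j+7)
lemma U_infix (j : ℕ) : U j <:+: S (j+7) := by
  obtain ⟨x, y, hxy, hz1, hz2⟩ := wd_spec j
  obtain ⟨T, hT⟩ : ∃ T, wd j ++ T = S (j+2) ++ S (j+5) := by
    have h1 : wd j <+: S (j+2) ++ S (j+3) := ⟨[y, x], hz2.symm⟩
    have h2 : S (j+2) ++ S (j+3) <+: S (j+2) ++ S (j+5) :=
      (List.prefix_append_right_inj _).2 (S_prefix' (by omega) (by omega))
    exact h1.trans h2
  have hXU : U j <:+: S (j+5) ++ (S (j+4) ++ S (j+5)) := by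
    refine ⟨wpow (S (j+4)) (A (j+4)), T, ?_⟩
    have hX : S (j+5) ++ (S (j+4) ++ S (j+5)) =
        (wpow (S (j+4)) (A (j+4)) ++ S (j+3)) ++
          ((wpow (S (j+3)) (A (j+3)) ++ S (j+2)) ++ S (j+5)) := by
      rw [← S_def3 (j+2), ← S_def3 (j+1)]
    rw [hX]
    unfold U
    rw [wpow_succ]
    simp only [List.append_assoc]
    rw [← hT]
  obtain ⟨e5, he5⟩ : ∃ e, A (j+5) = e + 1 := ⟨A (j+5) - 1, by have := A_pos (j+5); omega⟩
  obtain ⟨e6, he6⟩ : ∃ e, A (j+6) = e + 2 := ⟨A (j+6) - 2, by have := A_ge_two (j+6); omega⟩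
  have hX65 : S (j+5) ++ (S (j+4) ++ S (j+5)) <:+: S (j+6) ++ S (j+5) := by
    refine ⟨wpow (S (j+5)) e5, [], ?_⟩
    have hA : S (j+6) ++ S (j+5) =
        wpow (S (j+5)) e5 ++ (S (j+5) ++ (S (j+4) ++ S (j+5))) := by
      rw [S_def3 (j+3), he5, wpow_succ']
      simp [List.append_assoc]
    rw [hA]
    simp
  have h65p : S (j+6) ++ S (j+5) <+: S (j+7) := by
    have hB : S (j+7) = S (j+6) ++ (wpow (S (j+6)) (e6 + 1) ++ S (j+5)) := by
      rw [S_def3 (j+4), he6]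
      have : e6 + 2 = 1 + (e6 + 1) := by omega
      rw [this, wpow_add]
      simp [wpow, List.append_assoc]
    rw [hB]
    apply (List.prefix_append_right_inj _).2
    rw [wpow_succ]
    have h56 : S (j+5) <+: S (j+6) := S_prefix (j+5) (by omega)
    rw [List.append_assoc]
    exact h56.trans (List.prefix_append _ _)
  exact (hXU.trans hX65).trans h65p.isInfix

-- U j occurs nowhere in short words
lemma noOcc_small (j n : ℕ) (hn : 1 ≤ n) (hsmall : n ≤ j + 4) (i : ℕ) :
    ¬ IsOcc (U j) (S n) i := by
  intro h
  have h1 := isOcc_length h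
  have h2 : ℓ n ≤ ℓ (j+4) := ell_mono' hn hsmall
  have h3 := U_length_lb j
  have : (S n).length = ℓ n := rfl
  omega

-- disjoint families of occurrences
def DisjFam (u w : List Bool) (I : Finset ℕ) : Prop :=
  (∀ i ∈ I, IsOcc u w i) ∧
    ∀ i ∈ I, ∀ i' ∈ I, i ≠ i' → i + u.length ≤ i' ∨ i' + u.length ≤ i

lemma isOcc_left {u x y : List Bool} {i : ℕ} (h : IsOcc u (x ++ y) i)
    (hle : i + u.length ≤ x.length) : IsOcc u x i := by
  obtain ⟨pre, suf, hw, hl⟩ := h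
  have hplen : (pre ++ u).length ≤ x.length := by
    simp only [List.length_append]; omega
  have h1 : x = (pre ++ u) ++ suf.take (x.length - (pre ++ u).length) := by
    calc x = List.take x.length (x ++ y) := List.take_left.symm
    _ = List.take x.length ((pre ++ u) ++ suf) := by rw [hw]
    _ = List.take x.length (pre ++ u) ++ List.take (x.length - (pre ++ u).length) suf :=
        List.take_append
    _ = (pre ++ u) ++ List.take (x.length - (pre ++ u).length) suf := by
        rw [List.take_of_length_le hplen]
  exact ⟨pre, suf.take (x.length - (pre ++ u).length), by rw [List.append_assoc] at h1 ⊢; exact h1, hl⟩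

lemma isOcc_right {u x y : List Bool} {i : ℕ} (h : IsOcc u (x ++ y) i)
    (hge : x.length ≤ i) : IsOcc u y (i - x.length) := by
  obtain ⟨pre, suf, hw, hl⟩ := h
  have hxp : x.length ≤ pre.length := by omega
  have h1 : y = (pre.drop x.length) ++ (u ++ suf) := by
    calc y = List.drop x.length (x ++ y) := List.drop_left.symm
    _ = List.drop x.length (pre ++ (u ++ suf)) := by rw [← List.append_assoc, hw]
    _ = List.drop x.length pre ++ List.drop (x.length - pre.length) (u ++ suf) :=
        List.drop_append
    _ = List.drop x.length pre ++ (u ++ suf) := by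
        have : x.length - pre.length = 0 := by omega
        rw [this, List.drop_zero]
  exact ⟨pre.drop x.length, suf, by rw [← List.append_assoc] at h1; exact h1,
    by simp [hl]⟩

lemma disjFam_sub {u w : List Bool} {I J : Finset ℕ} (h : DisjFam u w I) (hJ : J ⊆ I) :
    DisjFam u w J :=
  ⟨fun i hi => h.1 i (hJ hi), fun i hi i' hi' => h.2 i (hJ hi) i' (hJ hi')⟩

lemma disjFam_split {u x y : List Bool} {I : Finset ℕ} (h : DisjFam u (x ++ y) I) :
    ∃ I₁ I₂ : Finset ℕ, DisjFam u x I₁ ∧ DisjFam u y I₂ ∧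
      I.card ≤ I₁.card + I₂.card + 1 := by
  classical
  set I₁ : Finset ℕ := I.filter (fun i => i + u.length ≤ x.length) with hI₁
  set IR : Finset ℕ := I.filter (fun i => x.length ≤ i) with hIR
  set C : Finset ℕ :=
    I.filter (fun i => ¬ (i + u.length ≤ x.length) ∧ ¬ (x.length ≤ i)) with hC
  refine ⟨I₁, IR.image (fun i => i - x.length), ?_, ?_, ?_⟩
  · constructor
    · intro i hi
      rw [hI₁, Finset.mem_filter] at hi
      exact isOcc_left (h.1 i hi.1) hi.2
    · intro i hi i' hi' hne
      rw [hI₁, Finset.mem_filter] at hi hi'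
      exact h.2 i hi.1 i' hi'.1 hne
  · constructor
    · intro i hi
      rw [Finset.mem_image] at hi
      obtain ⟨i0, hi0, rfl⟩ := hi
      rw [hIR, Finset.mem_filter] at hi0
      exact isOcc_right (h.1 i0 hi0.1) hi0.2
    · intro i hi i' hi' hne
      rw [Finset.mem_image] at hi hi'
      obtain ⟨i0, hi0, rfl⟩ := hi
      obtain ⟨i0', hi0', rfl⟩ := hi'
      rw [hIR, Finset.mem_filter] at hi0 hi0'
      have hne0 : i0 ≠ i0' := by intro hc; subst hc; exact hne rfl
      have := h.2 i0 hi0.1 i0' hi0'.1 hne0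
      omega
  · have hsub : I ⊆ I₁ ∪ IR ∪ C := by
      intro i hi
      simp only [hI₁, hIR, hC, Finset.mem_union, Finset.mem_filter]
      by_cases h1 : i + u.length ≤ x.length
      · exact Or.inl (Or.inl ⟨hi, h1⟩)
      · by_cases h2 : x.length ≤ i
        · exact Or.inl (Or.inr ⟨hi, h2⟩)
        · exact Or.inr ⟨hi, h1, h2⟩
    have hCcard : C.card ≤ 1 := by
      rw [Finset.card_le_one]
      intro a ha b hb
      rw [hC, Finset.mem_filter] at ha hb
      by_contra hne
      have := h.2 a ha.1 b hb.1 hne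
      have ha2 := ha.2
      have hb2 := hb.2
      omega
    have himg : IR.card = (IR.image (fun i => i - x.length)).card := by
      rw [Finset.card_image_of_injOn]
      intro a ha b hb hab
      simp only [hIR, Finset.coe_filter, Set.mem_setOf_eq] at ha hb
      simp only at hab
      omega
    calc I.card ≤ (I₁ ∪ IR ∪ C).card := Finset.card_le_card hsub
    _ ≤ (I₁ ∪ IR).card + C.card := Finset.card_union_le _ _
    _ ≤ I₁.card + IR.card + C.card := by
        have := Finset.card_union_le I₁ IR
        omega
    _ ≤ I₁.card + (IR.image (fun i => i - x.length)).card + 1 := by omega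

lemma disjFam_wpow {u x y : List Bool} {b₁ b₂ : ℕ}
    (h₁ : ∀ J : Finset ℕ, DisjFam u x J → J.card ≤ b₁)
    (h₂ : ∀ J : Finset ℕ, DisjFam u y J → J.card ≤ b₂) :
    ∀ (k : ℕ) (I : Finset ℕ), DisjFam u (wpow x k ++ y) I →
      I.card ≤ k * b₁ + b₂ + k := by
  intro k
  induction k with
  | zero =>
    intro I hI
    have : wpow x 0 ++ y = y := by simp
    rw [this] at hI
    have := h₂ I hI
    omega
  | succ k ih =>
    intro I hI
    have he : wpow x (k+1) ++ y = x ++ (wpow x k ++ y) := by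
      rw [wpow_succ, List.append_assoc]
    rw [he] at hI
    obtain ⟨I₁, I₂, hf1, hf2, hcard⟩ := disjFam_split hI
    have c1 := h₁ I₁ hf1
    have c2 := ih I₂ hf2
    have : (k+1) * b₁ = k * b₁ + b₁ := by ring
    omega

lemma disjFam_empty_card {u w : List Bool} {I : Finset ℕ}
    (h : DisjFam u w I) (hno : ∀ i, ¬ IsOcc u w i) : I.card = 0 := by
  rw [Finset.card_eq_zero]
  by_contra hne
  obtain ⟨i, hi⟩ := Finset.nonempty_iff_ne_empty.2 hne
  exact hno i (h.1 i hi)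

lemma count_main (j : ℕ) : ∀ n : ℕ, j + 5 ≤ n → ∀ I : Finset ℕ,
    DisjFam (U j) (S n) I → I.card * ℓ (j+5) + ℓ (j+5) ≤ 2 * ℓ n := by
  intro n
  induction n using Nat.strong_induction_on with
  | _ n ih =>
    intro hn I hI
    have hD0 : 0 < ℓ (j+5) := ell_pos (j+5)
    rcases Nat.lt_or_ge n (j+6) with hcase | hcase
    · -- n = j+5
      have : n = j+5 := by omega
      subst this
      have hc : I.card = 0 := disjFam_empty_card hI (noOcc j)
      rw [hc]
      omega
    rcases Nat.lt_or_ge n (j+7) with hcase2 | hcase2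
    · -- n = j+6
      have hn6 : n = j+6 := by omega
      subst hn6
      have hsp : S (j+6) = wpow (S (j+5)) (A (j+5)) ++ S (j+4) := by
        have h := S_def3 (j+3)
        rw [show j+3+3 = j+6 by omega, show j+3+2 = j+5 by omega,
          show j+3+1 = j+4 by omega] at h
        exact h
      rw [hsp] at hI
      have hcard := disjFam_wpow (b₁ := 0) (b₂ := 0)
        (fun J hJ => by rw [disjFam_empty_card hJ (noOcc j)])
        (fun J hJ => by rw [disjFam_empty_card hJ (noOcc_small j (j+4) (by omega) (by omega))])
        (A (j+5)) I hI
      have h6 : ℓ (j+6) = A (j+5) * ℓ (j+5) + ℓ (j+4) := by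
        have h := ell_def3 (j+3)
        rw [show j+3+3 = j+6 by omega, show j+3+2 = j+5 by omega,
          show j+3+1 = j+4 by omega] at h
        exact h
      have hA1 : 1 ≤ A (j+5) := A_pos (j+5)
      have : I.card * ℓ (j+5) ≤ A (j+5) * ℓ (j+5) :=
        Nat.mul_le_mul_right _ (by omega)
      nlinarith
    · -- n ≥ j+7
      obtain ⟨m, rfl⟩ : ∃ m, n = m + 3 := ⟨n - 3, by omega⟩
      have hm : j + 4 ≤ m := by omega
      rw [S_def3 m] at hI
      -- bounds from induction hypothesis
      set D := ℓ (j+5) with hD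
      have hmono1 : D ≤ ℓ (m+2) := ell_mono' (by omega) (by omega)
      have hmono2 : D ≤ ℓ (m+1) := ell_mono' (by omega) (by omega)
      have hb₁ : ∀ J : Finset ℕ, DisjFam (U j) (S (m+2)) J →
          J.card ≤ 2 * ℓ (m+2) / D - 1 := by
        intro J hJ
        have h := ih (m+2) (by omega) (by omega) J hJ
        have h2 : (J.card + 1) * D ≤ 2 * ℓ (m+2) := by ring_nf; ring_nf at h; omega
        have h3 : J.card + 1 ≤ 2 * ℓ (m+2) / D := (Nat.le_div_iff_mul_le hD0).2 h2
        omega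
      have hb₂ : ∀ J : Finset ℕ, DisjFam (U j) (S (m+1)) J →
          J.card ≤ 2 * ℓ (m+1) / D - 1 := by
        intro J hJ
        have h := ih (m+1) (by omega) (by omega) J hJ
        have h2 : (J.card + 1) * D ≤ 2 * ℓ (m+1) := by ring_nf; ring_nf at h; omega
        have h3 : J.card + 1 ≤ 2 * ℓ (m+1) / D := (Nat.le_div_iff_mul_le hD0).2 h2
        omega
      have hcard := disjFam_wpow hb₁ hb₂ (A (m+2)) I hI
      -- floor facts
      have hq1 : 1 ≤ 2 * ℓ (m+2) / D := (Nat.one_le_div_iff hD0).2 (by omega)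
      have hq2 : 1 ≤ 2 * ℓ (m+1) / D := (Nat.one_le_div_iff hD0).2 (by omega)
      have hfl1 : (2 * ℓ (m+2) / D) * D ≤ 2 * ℓ (m+2) := Nat.div_mul_le_self _ _
      have hfl2 : (2 * ℓ (m+1) / D) * D ≤ 2 * ℓ (m+1) := Nat.div_mul_le_self _ _
      set b₁ := 2 * ℓ (m+2) / D with hb1d
      set b₂ := 2 * ℓ (m+1) / D with hb2d
      have hbd1 : (b₁ - 1) * D + D ≤ 2 * ℓ (m+2) := by
        have : (b₁ - 1) * D + D = b₁ * D := by
          have : b₁ - 1 + 1 = b₁ := by omega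
          calc (b₁ - 1) * D + D = (b₁ - 1 + 1) * D := by ring
          _ = b₁ * D := by rw [this]
        omega
      have hbd2 : (b₂ - 1) * D + D ≤ 2 * ℓ (m+1) := by
        have : (b₂ - 1) * D + D = b₂ * D := by
          have : b₂ - 1 + 1 = b₂ := by omega
          calc (b₂ - 1) * D + D = (b₂ - 1 + 1) * D := by ring
          _ = b₂ * D := by rw [this]
        omega
      -- combine
      have hA : 1 ≤ A (m+2) := A_pos (m+2)
      have step1 : I.card * D + D ≤
          A (m+2) * ((b₁ - 1) * D + D) + ((b₂ - 1) * D + D) := by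
        have h := Nat.mul_le_mul_right D hcard
        -- h : I.card * D ≤ (A (m+2) * (b₁ - 1) + (b₂ - 1) + A (m+2)) * D
        nlinarith
      have step2 : A (m+2) * ((b₁ - 1) * D + D) + ((b₂ - 1) * D + D) ≤
          A (m+2) * (2 * ℓ (m+2)) + 2 * ℓ (m+1) := by
        have := Nat.mul_le_mul_left (A (m+2)) hbd1
        omega
      have hnext : ℓ (m+3) = A (m+2) * ℓ (m+2) + ℓ (m+1) := ell_def3 m
      nlinarith

lemma count_all (j n : ℕ) (hn : 1 ≤ n) (I : Finset ℕ)
    (hI : DisjFam (U j) (S n) I) : I.card * ℓ (j+5) ≤ 2 * ℓ n := by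
  rcases Nat.lt_or_ge n (j+5) with hc | hc
  · have : I.card = 0 := disjFam_empty_card hI (noOcc_small j n hn (by omega))
    rw [this]
    have := ell_pos n
    omega
  · have := count_main j n hc I hI
    omega

lemma U_len_pos (j : ℕ) : 1 ≤ (U j).length := by
  have := U_length_lb j
  have := ell_pos (j+4)
  omega

-- packings
def cov (P : Finset (ℕ × ℕ)) : ℕ := ∑ q ∈ P, (U q.2).length

def ValidPacking (w : List Bool) (P : Finset (ℕ × ℕ)) : Prop :=
  (∀ q ∈ P, IsOcc (U q.2) w q.1) ∧
    ∀ q ∈ P, ∀ q' ∈ P, q ≠ q' →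
      q.1 + (U q.2).length ≤ q'.1 ∨ q'.1 + (U q'.2).length ≤ q.1

lemma cov_le {w : List Bool} {P : Finset (ℕ × ℕ)} (h : ValidPacking w P) :
    cov P ≤ w.length := by
  classical
  have hdisj : ∀ q ∈ P, ∀ q' ∈ P, q ≠ q' →
      Disjoint (Finset.Ico q.1 (q.1 + (U q.2).length))
        (Finset.Ico q'.1 (q'.1 + (U q'.2).length)) := by
    intro q hq q' hq' hne
    rw [Finset.disjoint_left]
    intro a ha ha'
    rw [Finset.mem_Ico] at ha ha'
    have := h.2 q hq q' hq' hne
    omega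
  have hcard := Finset.card_biUnion hdisj
  have hsub : (P.biUnion fun q => Finset.Ico q.1 (q.1 + (U q.2).length)) ⊆
      Finset.range w.length := by
    intro a ha
    rw [Finset.mem_biUnion] at ha
    obtain ⟨q, hq, haq⟩ := ha
    rw [Finset.mem_Ico] at haq
    rw [Finset.mem_range]
    have := isOcc_length (h.1 q hq)
    omega
  have h1 : cov P = ∑ q ∈ P, (Finset.Ico q.1 (q.1 + (U q.2).length)).card := by
    unfold cov
    refine Finset.sum_congr rfl fun q hq => ?_
    rw [Nat.card_Ico]
    omega
  calc cov P = (P.biUnion fun q => Finset.Ico q.1 (q.1 + (U q.2).length)).card := by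
        rw [hcard, h1]
  _ ≤ (Finset.range w.length).card := Finset.card_le_card hsub
  _ = w.length := Finset.card_range _

def gset (w : List Bool) : Set ℕ := {c | ∃ P, ValidPacking w P ∧ c = cov P}

lemma gset_nonempty (w : List Bool) : (gset w).Nonempty :=
  ⟨0, ∅, ⟨fun q hq => absurd hq (Finset.notMem_empty q),
    fun q hq => absurd hq (Finset.notMem_empty q)⟩, by simp [cov]⟩

lemma gset_bdd (w : List Bool) : BddAbove (gset w) := by
  refine ⟨w.length, fun c hc => ?_⟩
  obtain ⟨P, hP, rfl⟩ := hc
  exact cov_le hP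

def gfun (w : List Bool) : ℕ := sSup (gset w)

lemma gfun_mem (w : List Bool) : gfun w ∈ gset w :=
  Nat.sSup_mem (gset_nonempty w) (gset_bdd w)

lemma gfun_le (w : List Bool) : gfun w ≤ w.length := by
  obtain ⟨P, hP, he⟩ := gfun_mem w
  rw [he]
  exact cov_le hP

lemma le_gfun {w : List Bool} {P : Finset (ℕ × ℕ)} (h : ValidPacking w P) :
    cov P ≤ gfun w :=
  le_csSup (gset_bdd w) ⟨P, h, rfl⟩

lemma gfun_U (j : ℕ) : gfun (U j) = (U j).length := by
  refine le_antisymm (gfun_le _) ?_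
  have hP : ValidPacking (U j) {(0, j)} := by
    constructor
    · intro q hq
      rw [Finset.mem_singleton] at hq
      subst hq
      exact isOcc_self (U j)
    · intro q hq q' hq' hne
      rw [Finset.mem_singleton] at hq hq'
      subst hq; subst hq'
      exact absurd rfl hne
  have := le_gfun hP
  simpa [cov] using this

lemma gfun_superadd (x y : List Bool) : gfun x + gfun y ≤ gfun (x ++ y) := by
  classical
  obtain ⟨P₁, hP₁, he₁⟩ := gfun_mem x
  obtain ⟨P₂, hP₂, he₂⟩ := gfun_mem y
  set Q₂ : Finset (ℕ × ℕ) := P₂.image (fun q => (x.length + q.1, q.2)) with hQ₂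
  have hmemQ₂ : ∀ q ∈ Q₂, x.length ≤ q.1 ∧ ∃ q' ∈ P₂, q = (x.length + q'.1, q'.2) := by
    intro q hq
    rw [hQ₂, Finset.mem_image] at hq
    obtain ⟨q', hq', rfl⟩ := hq
    exact ⟨by omega, q', hq', rfl⟩
  have hmemP₁ : ∀ q ∈ P₁, q.1 + (U q.2).length ≤ x.length :=
    fun q hq => isOcc_length (hP₁.1 q hq)
  have hvalid : ValidPacking (x ++ y) (P₁ ∪ Q₂) := by
    constructor
    · intro q hq
      rw [Finset.mem_union] at hq
      rcases hq with hq | hq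
      · exact isOcc_shift_left (hP₁.1 q hq)
      · obtain ⟨_, q', hq', rfl⟩ := hmemQ₂ q hq
        exact isOcc_shift_right (hP₂.1 q' hq')
    · intro q hq q' hq' hne
      rw [Finset.mem_union] at hq hq'
      rcases hq with hq | hq <;> rcases hq' with hq' | hq'
      · exact hP₁.2 q hq q' hq' hne
      · left
        have h1 := hmemP₁ q hq
        have h2 := (hmemQ₂ q' hq').1
        omega
      · right
        have h1 := hmemP₁ q' hq'
        have h2 := (hmemQ₂ q hq).1
        omega
      · obtain ⟨_, r, hr, rfl⟩ := hmemQ₂ q hq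
        obtain ⟨_, r', hr', rfl⟩ := hmemQ₂ q' hq'
        have hner : r ≠ r' := by
          intro hc; subst hc; exact hne rfl
        have := hP₂.2 r hr r' hr' hner
        simp only
        omega
  have hdisjoint : Disjoint P₁ Q₂ := by
    rw [Finset.disjoint_left]
    intro q hq hq'
    have h1 := hmemP₁ q hq
    have h2 := (hmemQ₂ q hq').1
    have h3 := U_len_pos q.2
    omega
  have hcovQ₂ : cov Q₂ = cov P₂ := by
    rw [hQ₂]
    unfold cov
    rw [Finset.sum_image]
    intro a ha b hb hab
    have h1 : a.1 = b.1 ∧ a.2 = b.2 := by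
      have := congrArg Prod.fst hab
      have := congrArg Prod.snd hab
      simp only at *
      omega
    exact Prod.ext h1.1 h1.2
  have hcov : cov (P₁ ∪ Q₂) = cov P₁ + cov P₂ := by
    unfold cov
    rw [Finset.sum_union hdisjoint]
    unfold cov at hcovQ₂
    omega
  have := le_gfun hvalid
  omega

lemma U_len_le (j : ℕ) : ((U j).length : ℝ) ≤ 3 * (ℓ (j+4) : ℝ) := by
  have h := U_length j
  have h2 : ℓ (j+3) ≤ ℓ (j+4) := ell_mono' (by omega) (by omega)
  have : (U j).length ≤ 3 * ℓ (j+4) := by omega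
  exact_mod_cast this

lemma ell_step_lb (j : ℕ) : (768 : ℝ) * (2:ℝ)^j * (ℓ (j+4) : ℝ) ≤ (ℓ (j+5) : ℝ) := by
  have h : ℓ (j+5) = A (j+4) * ℓ (j+4) + ℓ (j+3) := ell_def3 (j+2)
  have hA : A (j+4) = 768 * 2^j := by
    show 48 * 2 ^ (j+4) = 768 * 2^j
    rw [pow_add]
    ring
  have h2 : 768 * 2^j * ℓ (j+4) ≤ ℓ (j+5) := by
    rw [h, hA]
    omega
  calc (768 : ℝ) * (2:ℝ)^j * (ℓ (j+4) : ℝ) = ((768 * 2^j * ℓ (j+4) : ℕ) : ℝ) := by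
        push_cast; ring
  _ ≤ _ := by exact_mod_cast h2

lemma fiber_bound (j n : ℕ) (hn : 1 ≤ n) (c : ℕ)
    (hc : c * ℓ (j+5) ≤ 2 * ℓ n) :
    (c : ℝ) * ((U j).length : ℝ) ≤ (ℓ n : ℝ) / 128 * (1/2)^j := by
  have hpow : (0:ℝ) < (2:ℝ)^j := pow_pos (by norm_num) j
  have hc0 : (0:ℝ) ≤ (c:ℝ) := Nat.cast_nonneg c
  have hU0 : (0:ℝ) ≤ ((U j).length : ℝ) := Nat.cast_nonneg _
  have k0 : ((U j).length : ℝ) * (256 * 2^j) ≤ (ℓ (j+5) : ℝ) := by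
    have h2 := U_len_le j
    have h3 := ell_step_lb j
    nlinarith [show (0:ℝ) ≤ ((ℓ (j+4) : ℕ) : ℝ) from Nat.cast_nonneg _]
  have k1 : (c:ℝ) * (ℓ (j+5) : ℝ) ≤ 2 * (ℓ n : ℝ) := by
    calc (c:ℝ) * (ℓ (j+5) : ℝ) = ((c * ℓ (j+5) : ℕ) : ℝ) := by push_cast; ring
    _ ≤ ((2 * ℓ n : ℕ) : ℝ) := by exact_mod_cast hc
    _ = 2 * (ℓ n : ℝ) := by push_cast; ring
  have k2 : (c:ℝ) * ((U j).length : ℝ) * (256 * 2^j) ≤ 2 * (ℓ n : ℝ) := by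
    calc (c:ℝ) * ((U j).length : ℝ) * (256 * 2^j)
        = (c:ℝ) * (((U j).length : ℝ) * (256 * 2^j)) := by ring
    _ ≤ (c:ℝ) * (ℓ (j+5) : ℝ) := by
        exact mul_le_mul_of_nonneg_left k0 hc0
    _ ≤ 2 * (ℓ n : ℝ) := k1
  have hpos : (0:ℝ) < 256 * 2^j := by positivity
  rw [← mul_le_mul_iff_of_pos_right hpos]
  calc (c:ℝ) * ((U j).length : ℝ) * (256 * 2^j) ≤ 2 * (ℓ n : ℝ) := k2
  _ = (ℓ n : ℝ) / 128 * (1/2)^j * (256 * 2^j) := by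
      rw [div_pow, one_pow]
      field_simp
      ring

lemma gfun_S_le (n : ℕ) (hn : 1 ≤ n) : (gfun (S n) : ℝ) ≤ (ℓ n : ℝ) / 2 := by
  classical
  obtain ⟨P, hP, he⟩ := gfun_mem (S n)
  rw [he]
  set T := P.image Prod.snd with hT
  have hfib : ∑ j ∈ T, ∑ q ∈ P.filter (fun q => q.2 = j), (((U q.2).length : ℕ) : ℝ)
      = (cov P : ℝ) := by
    rw [Finset.sum_fiberwise_of_maps_to (fun q hq => Finset.mem_image_of_mem _ hq)]
    unfold cov
    push_cast
    rfl
  have hinner : ∀ j ∈ T, ∑ q ∈ P.filter (fun q => q.2 = j), (((U q.2).length : ℕ) : ℝ)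
      = ((P.filter (fun q => q.2 = j)).card : ℝ) * ((U j).length : ℝ) := by
    intro j hj
    have hconst : ∀ q ∈ P.filter (fun q => q.2 = j),
        (((U q.2).length : ℕ) : ℝ) = (((U j).length : ℕ) : ℝ) := by
      intro q hq
      rw [(Finset.mem_filter.1 hq).2]
    rw [Finset.sum_congr rfl hconst, Finset.sum_const, nsmul_eq_mul]
  -- per-fiber counting bound
  have hcount : ∀ j ∈ T, ((P.filter (fun q => q.2 = j)).card : ℝ) * ((U j).length : ℝ)
      ≤ (ℓ n : ℝ) / 128 * (1/2)^j := by
    intro j hj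
    set I : Finset ℕ := (P.filter (fun q => q.2 = j)).image Prod.fst with hI
    have hIcard : I.card = (P.filter (fun q => q.2 = j)).card := by
      rw [hI]
      apply Finset.card_image_of_injOn
      intro a ha b hb hab
      simp only [Finset.coe_filter, Set.mem_setOf_eq] at ha hb
      exact Prod.ext hab (ha.2.trans hb.2.symm)
    have hfam : DisjFam (U j) (S n) I := by
      constructor
      · intro i hi
        rw [hI, Finset.mem_image] at hi
        obtain ⟨q, hq, rfl⟩ := hi
        rw [Finset.mem_filter] at hq
        have := hP.1 q hq.1
        rw [hq.2] at this
        exact this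
      · intro i hi i' hi' hne
        rw [hI, Finset.mem_image] at hi hi'
        obtain ⟨q, hq, rfl⟩ := hi
        obtain ⟨q', hq', rfl⟩ := hi'
        rw [Finset.mem_filter] at hq hq'
        have hqne : q ≠ q' := fun hc => hne (by rw [hc])
        have := hP.2 q hq.1 q' hq'.1 hqne
        rw [hq.2, hq'.2] at this
        exact this
    have hcnt := count_all j n hn I hfam
    rw [hIcard] at hcnt
    exact fiber_bound j n hn _ hcnt
  have hsumT : ∑ j ∈ T, ((1:ℝ)/2)^j ≤ 2 := by
    have hsub : T ⊆ Finset.range (T.sup id + 1) := by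
      intro j hj
      rw [Finset.mem_range]
      have h2 : j ≤ T.sup id := Finset.le_sup (f := id) hj
      omega
    calc ∑ j ∈ T, ((1:ℝ)/2)^j ≤ ∑ j ∈ Finset.range (T.sup id + 1), ((1:ℝ)/2)^j :=
          Finset.sum_le_sum_of_subset_of_nonneg hsub
            (fun i _ _ => by positivity)
    _ ≤ 2 := sum_geometric_two_le _
  have hln : (0:ℝ) ≤ (ℓ n : ℝ) := Nat.cast_nonneg _
  calc (cov P : ℝ) = ∑ j ∈ T, ∑ q ∈ P.filter (fun q => q.2 = j), (((U q.2).length : ℕ) : ℝ) :=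
        hfib.symm
  _ = ∑ j ∈ T, ((P.filter (fun q => q.2 = j)).card : ℝ) * ((U j).length : ℝ) :=
        Finset.sum_congr rfl hinner
  _ ≤ ∑ j ∈ T, (ℓ n : ℝ) / 128 * (1/2)^j := Finset.sum_le_sum hcount
  _ = (ℓ n : ℝ) / 128 * ∑ j ∈ T, ((1:ℝ)/2)^j := by rw [Finset.mul_sum]
  _ ≤ (ℓ n : ℝ) / 128 * 2 := by
      apply mul_le_mul_of_nonneg_left hsumT (by positivity)
  _ ≤ (ℓ n : ℝ) / 2 := by linarith


theorem sturmian_subadditive_counterexample :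
    ∃ (a : ℕ → ℕ), (∀ n, 1 ≤ a n) ∧
      ∃ F : List Bool → ℝ, WordSubadditive (sturmW a) F ∧
        ∃ w₁ w₂ : ℕ → List Bool,
          (∀ n, w₁ n ∈ sturmW a) ∧ (∀ n, w₂ n ∈ sturmW a) ∧
          Tendsto (fun n => (w₁ n).length) atTop atTop ∧
          Tendsto (fun n => (w₂ n).length) atTop atTop ∧
          Filter.limsup (fun n => F (w₁ n) / (w₁ n).length) atTop <
            Filter.liminf (fun n => F (w₂ n) / (w₂ n).length) atTop := by
  refine ⟨A, A_pos, fun w => (w.length : ℝ) - gfun w, ⟨?_, 1, by norm_num, ?_⟩,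
    U, fun n => S (n+1), ?_, ?_, ?_, ?_, ?_⟩
  · -- subadditivity
    intro u v _ _ _
    have h := gfun_superadd u v
    have hc : ((gfun u : ℕ) : ℝ) + (gfun v : ℕ) ≤ ((gfun (u ++ v) : ℕ) : ℝ) := by
      exact_mod_cast h
    simp only [List.length_append]
    push_cast
    linarith
  · -- bound
    intro w _
    have h1 : (0:ℝ) ≤ gfun w := Nat.cast_nonneg _
    have h2 : ((gfun w : ℕ) : ℝ) ≤ w.length := by exact_mod_cast gfun_le w
    rw [abs_le]
    dsimp only
    constructor <;> linarith
  · -- membership w₁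
    intro n
    exact ⟨n + 7, by omega, U_infix n⟩
  · -- membership w₂
    intro n
    exact ⟨n + 1, by omega, List.infix_refl _⟩
  · -- lengths of w₁ → ∞
    apply tendsto_atTop_mono (f := fun n => n)
    · intro n
      have h1 := U_length_lb n
      have h2 := ell_ge_self (n+4) (by omega)
      omega
    · exact tendsto_id
  · -- lengths of w₂ → ∞
    apply tendsto_atTop_mono (f := fun n => n)
    · intro n
      have h2 := ell_ge_self (n+1) (by omega)
      have h3 : ((fun n => S (n + 1)) n).length = ℓ (n+1) := rfl
      omega
    · exact tendsto_id
  · -- limsup < liminf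
    have hzero : (fun n => ((U n).length : ℝ) - gfun (U n)) = fun _ => (0:ℝ) := by
      funext n
      rw [gfun_U n]
      ring
    have hlimsup :
        Filter.limsup (fun n => (((U n).length : ℝ) - gfun (U n)) / (U n).length) atTop
          = 0 := by
      have : (fun n => (((U n).length : ℝ) - gfun (U n)) / (U n).length)
          = fun _ => (0:ℝ) := by
        funext n
        rw [gfun_U n]
        simp
      rw [this, Filter.limsup_const]
    rw [hlimsup]
    have hbound : ∀ n : ℕ,
        (1:ℝ)/2 ≤ (((S (n+1)).length : ℝ) - gfun (S (n+1))) / (S (n+1)).length := by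
      intro n
      have hpos : (0:ℝ) < ((S (n+1)).length : ℝ) := by
        have := ell_pos (n+1)
        have h2 : (S (n+1)).length = ℓ (n+1) := rfl
        exact_mod_cast by omega
      have hg : (gfun (S (n+1)) : ℝ) ≤ ((S (n+1)).length : ℝ) / 2 := by
        have := gfun_S_le (n+1) (by omega)
        exact this
      rw [le_div_iff₀ hpos]
      linarith
    have hub : ∀ n : ℕ,
        (((S (n+1)).length : ℝ) - gfun (S (n+1))) / (S (n+1)).length ≤ 1 := by
      intro n
      have hpos : (0:ℝ) < ((S (n+1)).length : ℝ) := by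
        have := ell_pos (n+1)
        have h2 : (S (n+1)).length = ℓ (n+1) := rfl
        exact_mod_cast by omega
      have h1 : (0:ℝ) ≤ gfun (S (n+1)) := Nat.cast_nonneg _
      rw [div_le_one hpos]
      linarith
    have hlb : (1:ℝ)/2 ≤ Filter.liminf
        (fun n => (((S (n+1)).length : ℝ) - gfun (S (n+1))) / (S (n+1)).length) atTop := by
      apply Filter.le_liminf_of_le
      · exact isCoboundedUnder_ge_of_eventually_le atTop (Filter.Eventually.of_forall hub)
      · exact Filter.Eventually.of_forall hbound
    linarith

end
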